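/- (Theorem 2) Let e, r : ℝ → ℝ be differentiable, β > 0, z₂(t) = (e(t), r(t)) ∈ ℝ², and let J be a constant with c_j ≤ J ≤ c_J (0 < c_j ≤ c_J). Suppose B : ℝ → ℝ satisfies B̲ₙ ≤ B(t) ≤ B̄ₙ with B̲ₙ > 0, χ : ℝ → ℝ satisfies |χ(t)| ≤ c₁ + c₂‖z₂(t)‖ with c₁, c₂ ≥ 0, and the closed-loop equations e'(t) = r(t) − β e(t) and J r'(t) = χ(t) − e(t) − B(t)(k₂ r(t) + (k₃ + k₄‖z₂(t)‖) sign(r(t))) hold, where the gains satisfy k₂ > 0, k₃ ≥ c₁/B̲ₙ, k₄ ≥ c₂/B̲ₙ. Then the motor synchronization error converges exponentially: for all t ≥ t₀, ‖z₂(t)‖ ≤ √(b_ϱ/a_ϱ) · e^{−(λ_ϱ/2)(t − t₀)} ‖z₂(t₀)‖, where a_ϱ = min(1/2, c_j/2), b_ϱ = max(1/2, c_J/2), and λ_ϱ = min(β, B̲ₙ k₂)/b_ϱ. -/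

import Mathlib

/-- The stacked vector `z₂ = (e, r) ∈ ℝ²` with `‖z₂‖² = e² + r²`. -/
noncomputable def stack2 (x y : ℝ) : WithLp 2 (ℝ × ℝ) :=
  (WithLp.equiv 2 _).symm (x, y)

lemma stack2_norm_sq (x y : ℝ) : ‖stack2 x y‖ ^ 2 = x ^ 2 + y ^ 2 := by
  have h := WithLp.prod_norm_eq_of_L2 (stack2 x y)
  rw [h, Real.sq_sqrt (by positivity)]
  simp [stack2]

lemma mul_sign_eq_abs (x : ℝ) : x * Real.sign x = |x| := by
  rcases lt_trichotomy x 0 with h | h | h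
  · rw [Real.sign_of_neg h, abs_of_neg h]; ring
  · simp [h]
  · rw [Real.sign_of_pos h, abs_of_pos h]; ring

set_option maxHeartbeats 2000000 in
/-- Theorem 2: exponential convergence of the motor synchronization
error: `‖z₂(t)‖ ≤ √(b_ϱ/a_ϱ) e^{−(lam_ϱ/2)(t − t₀)} ‖z₂(t₀)‖` for all `t ≥ t₀`. -/
theorem stmt12
    (e r ed rd : ℝ → ℝ)
    (he : ∀ t, HasDerivAt e (ed t) t) (hr : ∀ t, HasDerivAt r (rd t) t)
    (β : ℝ) (hβ : 0 < β)
    (z₂ : ℝ → WithLp 2 (ℝ × ℝ)) (hz₂ : z₂ = fun t => stack2 (e t) (r t))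
    (J c_j c_J : ℝ) (hc_j : 0 < c_j) (hc_jJ : c_j ≤ c_J)
    (hJlow : c_j ≤ J) (hJhigh : J ≤ c_J)
    (B : ℝ → ℝ) (Blo Bhi : ℝ) (hBlo : 0 < Blo)
    (hB : ∀ t, Blo ≤ B t ∧ B t ≤ Bhi)
    (χ : ℝ → ℝ) (c₁ c₂ : ℝ) (hc₁ : 0 ≤ c₁) (hc₂ : 0 ≤ c₂)
    (hχ : ∀ t, |χ t| ≤ c₁ + c₂ * ‖z₂ t‖)
    (k₂ k₃ k₄ : ℝ) (hk₂ : 0 < k₂) (hk₃ : c₁ / Blo ≤ k₃) (hk₄ : c₂ / Blo ≤ k₄)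
    (hloop₁ : ∀ t, ed t = r t - β * e t)
    (hloop₂ : ∀ t, J * rd t
      = χ t - e t - B t * (k₂ * r t + (k₃ + k₄ * ‖z₂ t‖) * Real.sign (r t)))
    (a_ϱ b_ϱ lam_ϱ : ℝ) (ha : a_ϱ = min (1 / 2) (c_j / 2)) (hb : b_ϱ = max (1 / 2) (c_J / 2))
    (hlam : lam_ϱ = min β (Blo * k₂) / b_ϱ) :
    ∀ t₀ t : ℝ, t₀ ≤ t →
      ‖z₂ t‖ ≤ Real.sqrt (b_ϱ / a_ϱ) * Real.exp (-(lam_ϱ / 2) * (t - t₀)) * ‖z₂ t₀‖ := by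
  intro t₀ t ht
  have hnsq : ∀ s, ‖z₂ s‖ ^ 2 = e s ^ 2 + r s ^ 2 := by
    intro s; rw [hz₂]; exact stack2_norm_sq _ _
  have ha_pos : 0 < a_ϱ := by rw [ha]; positivity
  have hb_pos : 0 < b_ϱ := by rw [hb]; exact lt_of_lt_of_le (by norm_num) (le_max_left _ _)
  have hb_half : (1:ℝ)/2 ≤ b_ϱ := hb ▸ le_max_left _ _
  have hbJ : J ≤ 2 * b_ϱ := by
    have := hb ▸ le_max_right (1/2 : ℝ) (c_J / 2); linarith
  have haJ : 2 * a_ϱ ≤ J := by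
    have := ha ▸ min_le_right (1/2 : ℝ) (c_j / 2); linarith
  have ha_half : a_ϱ ≤ 1/2 := ha ▸ min_le_left _ _
  have hJpos : 0 < J := lt_of_lt_of_le hc_j hJlow
  have hm_le₁ : min β (Blo * k₂) ≤ β := min_le_left _ _
  have hm_le₂ : min β (Blo * k₂) ≤ Blo * k₂ := min_le_right _ _
  have hm_pos : 0 < min β (Blo * k₂) := lt_min hβ (by positivity)
  have hlam_pos : 0 < lam_ϱ := by rw [hlam]; positivity
  set lam := lam_ϱ with hlamdef
  have hlamb : lam * b_ϱ = min β (Blo * k₂) := by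
    rw [hlam]; field_simp
  -- Lyapunov function
  set V : ℝ → ℝ := fun s => (1/2) * e s ^ 2 + (1/2) * J * r s ^ 2 with hV
  have hVd : ∀ s, HasDerivAt V (e s * ed s + J * (r s * rd s)) s := by
    intro s
    have h1 := ((he s).pow 2).const_mul (1/2 : ℝ)
    have h2 := ((hr s).pow 2).const_mul ((1/2) * J : ℝ)
    have := h1.add h2
    refine this.congr_deriv ?_
    ring
  -- key differential inequality
  have hkey : ∀ s, e s * ed s + J * (r s * rd s) + lam * V s ≤ 0 := by
    intro s
    have hBs := hB s
    have hx := hχ s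
    have hn : 0 ≤ ‖z₂ s‖ := norm_nonneg _
    have habs : r s * Real.sign (r s) = |r s| := mul_sign_eq_abs _
    have hrabs : r s ≤ |r s| := le_abs_self _
    have hrabs' : -|r s| ≤ r s := neg_abs_le _
    have habs_nonneg : (0:ℝ) ≤ |r s| := abs_nonneg _
    have hk₃' : c₁ ≤ Blo * k₃ := by
      rw [div_le_iff₀ hBlo] at hk₃; linarith [hk₃]
    have hk₄' : c₂ ≤ Blo * k₄ := by
      rw [div_le_iff₀ hBlo] at hk₄; linarith [hk₄]
    have hk₃0 : 0 ≤ k₃ := le_trans (by positivity) hk₃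
    have hk₄0 : 0 ≤ k₄ := le_trans (by positivity) hk₄
    -- χ s * r s ≤ (c₁ + c₂ ‖z₂ s‖) * |r s|
    have hχr : χ s * r s ≤ (c₁ + c₂ * ‖z₂ s‖) * |r s| := by
      calc χ s * r s ≤ |χ s * r s| := le_abs_self _
        _ = |χ s| * |r s| := abs_mul _ _
        _ ≤ (c₁ + c₂ * ‖z₂ s‖) * |r s| := by
            apply mul_le_mul_of_nonneg_right hx habs_nonneg
    -- B lower bounds
    have hB1 : Blo * k₂ * r s ^ 2 ≤ B s * k₂ * r s ^ 2 := by
      have h := mul_le_mul_of_nonneg_right hBs.1 (show (0:ℝ) ≤ k₂ * r s ^ 2 by positivity)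
      nlinarith [h]
    have hB2 : Blo * (k₃ + k₄ * ‖z₂ s‖) * |r s| ≤ B s * (k₃ + k₄ * ‖z₂ s‖) * |r s| := by
      have h0 : 0 ≤ (k₃ + k₄ * ‖z₂ s‖) * |r s| := by positivity
      have h := mul_le_mul_of_nonneg_right hBs.1 h0
      nlinarith [h]
    have hchi2 : (c₁ + c₂ * ‖z₂ s‖) * |r s| ≤ Blo * (k₃ + k₄ * ‖z₂ s‖) * |r s| := by
      have h := mul_le_mul_of_nonneg_right (add_le_add hk₃' (mul_le_mul_of_nonneg_right hk₄' hn)) habs_nonneg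
      nlinarith [h, mul_le_mul_of_nonneg_left (mul_le_mul_of_nonneg_right (le_refl ‖z₂ s‖) hn) hc₂]
    -- expand the derivative using the loop equations
    have hexp : e s * ed s + J * (r s * rd s)
        = -β * e s ^ 2 + χ s * r s - B s * k₂ * r s ^ 2
          - B s * (k₃ + k₄ * ‖z₂ s‖) * |r s| := by
      rw [hloop₁ s, ← habs]
      have h2 : J * (r s * rd s) = r s * (J * rd s) := by ring
      rw [h2, hloop₂ s]
      ring
    -- V s ≤ b_ϱ (e²+r²)
    have hVb : V s ≤ b_ϱ * (e s ^ 2 + r s ^ 2) := by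
      simp only [hV]
      nlinarith [sq_nonneg (e s), sq_nonneg (r s)]
    have hlamV : lam * V s ≤ min β (Blo * k₂) * (e s ^ 2 + r s ^ 2) := by
      calc lam * V s ≤ lam * (b_ϱ * (e s ^ 2 + r s ^ 2)) :=
            mul_le_mul_of_nonneg_left hVb hlam_pos.le
        _ = (lam * b_ϱ) * (e s ^ 2 + r s ^ 2) := by ring
        _ = min β (Blo * k₂) * (e s ^ 2 + r s ^ 2) := by rw [hlamb]
    have hmin : min β (Blo * k₂) * (e s ^ 2 + r s ^ 2)
        ≤ β * e s ^ 2 + Blo * k₂ * r s ^ 2 := by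
      nlinarith [sq_nonneg (e s), sq_nonneg (r s)]
    rw [hexp]
    linarith [hχr, hchi2, hB2, hB1, hlamV, hmin]
  -- Gronwall via W = V * exp(lam t) antitone
  set W : ℝ → ℝ := fun s => V s * Real.exp (lam * s) with hW
  have hWanti : Antitone W := by
    apply antitone_of_deriv_nonpos
    · intro s
      exact ((hVd s).mul (((hasDerivAt_id s).const_mul lam).exp)).differentiableAt
    · intro s
      have hd : HasDerivAt W ((e s * ed s + J * (r s * rd s)) * Real.exp (lam * s)
          + V s * (Real.exp (lam * s) * lam)) s := by
        have hexp : HasDerivAt (fun x => Real.exp (lam * x)) (Real.exp (lam * s) * lam) s := by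
          have := ((hasDerivAt_id s).const_mul lam).exp
          simpa [mul_comm] using this
        exact (hVd s).mul hexp
      rw [hd.deriv]
      have hepos : 0 < Real.exp (lam * s) := Real.exp_pos _
      have h := mul_le_mul_of_nonneg_right (hkey s) hepos.le
      nlinarith [h]
  have hWle : W t ≤ W t₀ := hWanti ht
  -- V t ≤ V t₀ * exp(-lam (t - t₀))
  have hVle : V t ≤ V t₀ * Real.exp (-lam * (t - t₀)) := by
    have hepos : 0 < Real.exp (lam * t) := Real.exp_pos _
    have h := hWle
    simp only [hW] at h
    rw [show (-lam * (t - t₀)) = lam * t₀ - lam * t by ring, Real.exp_sub, ← mul_div_assoc,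
      le_div_iff₀ hepos]
    exact h
  -- sandwich bounds
  have hVlow : ∀ s, a_ϱ * ‖z₂ s‖ ^ 2 ≤ V s := by
    intro s
    rw [hnsq s]
    simp only [hV]
    linarith [mul_le_mul_of_nonneg_right ha_half (sq_nonneg (e s)),
      mul_le_mul_of_nonneg_right haJ (sq_nonneg (r s))]
  have hVhigh : ∀ s, V s ≤ b_ϱ * ‖z₂ s‖ ^ 2 := by
    intro s
    rw [hnsq s]
    simp only [hV]
    linarith [mul_le_mul_of_nonneg_right hb_half (sq_nonneg (e s)),
      mul_le_mul_of_nonneg_right hbJ (sq_nonneg (r s))]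
  have hfinal : ‖z₂ t‖ ^ 2 ≤ (b_ϱ / a_ϱ) * Real.exp (-lam * (t - t₀)) * ‖z₂ t₀‖ ^ 2 := by
    have h1 : a_ϱ * ‖z₂ t‖ ^ 2 ≤ b_ϱ * ‖z₂ t₀‖ ^ 2 * Real.exp (-lam * (t - t₀)) := by
      calc a_ϱ * ‖z₂ t‖ ^ 2 ≤ V t := hVlow t
        _ ≤ V t₀ * Real.exp (-lam * (t - t₀)) := hVle
        _ ≤ b_ϱ * ‖z₂ t₀‖ ^ 2 * Real.exp (-lam * (t - t₀)) :=
            mul_le_mul_of_nonneg_right (hVhigh t₀) (Real.exp_pos _).le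
    rw [← le_div_iff₀' ha_pos] at h1
    calc ‖z₂ t‖ ^ 2 ≤ b_ϱ * ‖z₂ t₀‖ ^ 2 * Real.exp (-lam * (t - t₀)) / a_ϱ := h1
      _ = (b_ϱ / a_ϱ) * Real.exp (-lam * (t - t₀)) * ‖z₂ t₀‖ ^ 2 := by ring
  -- take square roots
  have h2 : ‖z₂ t‖ = Real.sqrt (‖z₂ t‖ ^ 2) := (Real.sqrt_sq (norm_nonneg _)).symm
  rw [h2]
  calc Real.sqrt (‖z₂ t‖ ^ 2)
      ≤ Real.sqrt ((b_ϱ / a_ϱ) * Real.exp (-lam * (t - t₀)) * ‖z₂ t₀‖ ^ 2) :=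
        Real.sqrt_le_sqrt hfinal
    _ = Real.sqrt (b_ϱ / a_ϱ) * Real.sqrt (Real.exp (-lam * (t - t₀)))
          * Real.sqrt (‖z₂ t₀‖ ^ 2) := by
        rw [Real.sqrt_mul (by positivity), Real.sqrt_mul (by positivity)]
    _ = Real.sqrt (b_ϱ / a_ϱ) * Real.exp (-(lam / 2) * (t - t₀)) * ‖z₂ t₀‖ := by
        rw [Real.sqrt_sq (norm_nonneg _), ← Real.exp_half]
        ring_nf
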